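/- Let F be a real polynomial in n variables that is nonnegative on ℝⁿ and such that F^k is not a sum of squares for any odd k ≥ 1. Then for every positive integer m, the polynomial X₁^{2m}·F is nonnegative and (X₁^{2m}·F)^k is not a sum of squares for any odd k ≥ 1. -/
import Mathlib


open MvPolynomial

/-- `X i` divides `p - p[X i := 0]`. -/
lemma X_dvd_sub_aeval {n : ℕ} (i : Fin (n + 1)) (p : MvPolynomial (Fin (n + 1)) ℝ) :
    X i ∣ (p - aeval (Function.update X i 0) p) := by
  induction p using MvPolynomial.induction_on with
  | C a => simp
  | add p q hp hq =>
      have : p + q - aeval (Function.update X i 0) (p + q)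
          = (p - aeval (Function.update X i 0) p) + (q - aeval (Function.update X i 0) q) := by
        rw [map_add]; ring
      rw [this]; exact dvd_add hp hq
  | mul_X p j hp =>
      by_cases hij : j = i
      · subst hij
        have : p * X j - aeval (Function.update X j 0) (p * X j) = p * X j := by
          simp [Function.update_self]
        rw [this]; exact Dvd.intro_left p rfl
      · have : p * X j - aeval (Function.update X i 0) (p * X j)
            = (p - aeval (Function.update X i 0) p) * X j := by
          rw [map_mul, aeval_X, Function.update_of_ne hij]; ring
        rw [this]; exact Dvd.dvd.mul_right hp _

/-- If a sum of squares of real polynomials is zero, every summand is zero. -/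
lemma sq_eq_zero_of_sum_sq_eq_zero {n r : ℕ} (H : Fin r → MvPolynomial (Fin (n + 1)) ℝ)
    (h : ∑ i, (H i) ^ 2 = 0) (i : Fin r) : H i = 0 := by
  apply MvPolynomial.funext
  intro x
  have hx : ∑ j, (eval x (H j)) ^ 2 = 0 := by
    have := congrArg (eval x) h
    simpa [eval_sum] using this
  have : ∀ j ∈ Finset.univ, (eval x (H j)) ^ 2 = 0 := by
    intro j _
    have := Finset.sum_eq_zero_iff_of_nonneg (fun j _ => sq_nonneg (eval x (H j))) |>.mp hx
    exact this j (Finset.mem_univ j)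
  have := this i (Finset.mem_univ i)
  simpa using pow_eq_zero_iff (n := 2) (by norm_num) |>.mp this

/-- If `X 0` divides a sum of squares, it divides each square's base. -/
lemma X_dvd_of_X_dvd_sum_sq {n r : ℕ} (H : Fin r → MvPolynomial (Fin (n + 1)) ℝ)
    (h : X 0 ∣ ∑ i, (H i) ^ 2) (i : Fin r) : X 0 ∣ H i := by
  set φ : MvPolynomial (Fin (n + 1)) ℝ →ₐ[ℝ] MvPolynomial (Fin (n + 1)) ℝ :=
    aeval (Function.update X 0 0) with hφ
  obtain ⟨q, hq⟩ := h
  have hφX : φ (X 0) = 0 := by simp [hφ, Function.update_self]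
  have hsum : ∑ j, (φ (H j)) ^ 2 = 0 := by
    have := congrArg φ hq
    simp only [map_sum, map_pow, map_mul, hφX, zero_mul] at this
    exact this
  have hHi : φ (H i) = 0 := sq_eq_zero_of_sum_sq_eq_zero (fun j => φ (H j)) hsum i
  have := X_dvd_sub_aeval (0 : Fin (n + 1)) (H i)
  rw [← hφ] at this
  rwa [hHi, sub_zero] at this

/-- If `X 0 ^ (2N)` divides a sum of squares, then `X 0 ^ N` divides each base. -/
lemma Xpow_dvd_of_dvd_sum_sq {n : ℕ} (N : ℕ) :
    ∀ (r : ℕ) (H : Fin r → MvPolynomial (Fin (n + 1)) ℝ),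
      (X 0 : MvPolynomial (Fin (n + 1)) ℝ) ^ (2 * N) ∣ ∑ i, (H i) ^ 2 →
      ∀ i, (X 0 : MvPolynomial (Fin (n + 1)) ℝ) ^ N ∣ H i := by
  induction N with
  | zero => intro r H _ i; simpa using one_dvd _
  | succ N ih =>
      intro r H h i
      have h1 : (X 0 : MvPolynomial (Fin (n + 1)) ℝ) ∣ ∑ i, (H i) ^ 2 :=
        dvd_trans (dvd_pow_self _ (by omega)) h
      have hdvd : ∀ j, (X 0 : MvPolynomial (Fin (n + 1)) ℝ) ∣ H j :=
        X_dvd_of_X_dvd_sum_sq H h1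
      choose G hG using hdvd
      have hsum : ∑ j, (H j) ^ 2 = X 0 ^ 2 * ∑ j, (G j) ^ 2 := by
        rw [Finset.mul_sum]
        exact Finset.sum_congr rfl fun j _ => by rw [hG j]; ring
      have hX2 : (X 0 : MvPolynomial (Fin (n + 1)) ℝ) ^ 2 ≠ 0 :=
        pow_ne_zero _ (MvPolynomial.X_ne_zero 0)
      have h2 : (X 0 : MvPolynomial (Fin (n + 1)) ℝ) ^ (2 * N) ∣ ∑ j, (G j) ^ 2 := by
        have : X 0 ^ 2 * X 0 ^ (2 * N) ∣ X 0 ^ 2 * ∑ j, (G j) ^ 2 := by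
          rw [← hsum, ← pow_add]
          have : 2 + 2 * N = 2 * (N + 1) := by ring
          rw [this]; exact h
        exact (mul_dvd_mul_iff_left hX2).mp this
      have := ih r G h2 i
      rw [hG i, pow_succ']
      exact mul_dvd_mul_left _ this

theorem stubborn_times_even_power (n : ℕ) (F : MvPolynomial (Fin (n + 1)) ℝ)
    (hnonneg : ∀ x : Fin (n + 1) → ℝ, 0 ≤ eval x F)
    (hstub : ∀ k : ℕ, Odd k → 1 ≤ k →
      ¬ ∃ (r : ℕ) (H : Fin r → MvPolynomial (Fin (n + 1)) ℝ), F ^ k = ∑ i, (H i) ^ 2)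
    (m : ℕ) (hm : 1 ≤ m) :
    (∀ x : Fin (n + 1) → ℝ, 0 ≤ eval x ((X 0 ^ (2 * m)) * F)) ∧
    ∀ k : ℕ, Odd k → 1 ≤ k →
      ¬ ∃ (r : ℕ) (H : Fin r → MvPolynomial (Fin (n + 1)) ℝ),
        ((X 0 ^ (2 * m)) * F) ^ k = ∑ i, (H i) ^ 2 := by
  constructor
  · intro x
    rw [eval_mul, eval_pow, eval_X]
    exact mul_nonneg ((even_two_mul m).pow_nonneg _) (hnonneg x)
  · intro k hodd hk ⟨r, H, hH⟩
    apply hstub k hodd hk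
    have hH' : (X 0 : MvPolynomial (Fin (n + 1)) ℝ) ^ (2 * (m * k)) * F ^ k = ∑ i, (H i) ^ 2 := by
      rw [← hH, mul_pow, ← pow_mul]
      ring_nf
    have hdvd : (X 0 : MvPolynomial (Fin (n + 1)) ℝ) ^ (2 * (m * k)) ∣ ∑ i, (H i) ^ 2 :=
      ⟨F ^ k, hH'.symm⟩
    have := Xpow_dvd_of_dvd_sum_sq (m * k) r H hdvd
    choose G hG using this
    have hsum : ∑ i, (H i) ^ 2 = X 0 ^ (2 * (m * k)) * ∑ i, (G i) ^ 2 := by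
      rw [Finset.mul_sum]
      refine Finset.sum_congr rfl fun i _ => ?_
      rw [hG i, mul_pow, ← pow_mul]
      ring_nf
    have hXne : (X 0 : MvPolynomial (Fin (n + 1)) ℝ) ^ (2 * (m * k)) ≠ 0 :=
      pow_ne_zero _ (MvPolynomial.X_ne_zero 0)
    refine ⟨r, G, ?_⟩
    apply mul_left_cancel₀ hXne
    rw [← hsum, hH']
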